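/- (Theorem, discrete measure, conjugate pair, monotonicity.) Under the stated discrete paraorthogonality setup with a conjugate pair of zeros, if at some t ∈ I one has W̃_j(t) ≥ 0 for all j = 0,…,N and W̃_j(t) > 0 for at least one j, then φ_n′(t) > 0; that is, the zero ζ(t) = e^{iφ_n(t)} moves strictly counterclockwise along the unit circle as t increases. -/

import Mathlib

open Polynomial

open Complex

lemma aux_euler (x : ℝ) : Complex.exp (x * I) = (Real.cos x : ℂ) + (Real.sin x : ℂ) * I := by
  rw [Complex.exp_mul_I, Complex.ofReal_cos, Complex.ofReal_sin]

lemma aux_two_cos (x : ℝ) : Complex.exp (x * I) + Complex.exp (-x * I) = ((2 * Real.cos x : ℝ) : ℂ) := by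
  have h : (-(x:ℂ)) * I = ((-x : ℝ) : ℂ) * I := by push_cast; ring
  rw [show (-(x:ℂ):ℂ) = ((-x:ℝ):ℂ) from by push_cast; ring] at h
  rw [show (-(x:ℂ) * I : ℂ) = ((-x:ℝ):ℂ) * I from by push_cast; ring]
  rw [aux_euler, aux_euler]
  push_cast [Real.cos_neg, Real.sin_neg]
  ring

lemma aux_exp_inv (x : ℝ) : Complex.exp (x * I) * Complex.exp (-x * I) = 1 := by
  rw [← Complex.exp_add]; norm_num

lemma aux_conj_exp (x : ℝ) : (starRingEnd ℂ) (Complex.exp (x * I)) = Complex.exp (-x * I) := by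
  rw [← Complex.exp_conj]; congr 1; simp

lemma aux_pair (w θ : ℝ) :
    (Complex.exp (w * I) - Complex.exp (θ * I)) * (Complex.exp (w * I) - Complex.exp (-θ * I)) *
      Complex.exp (-w * I) = ((2 * Real.cos w - 2 * Real.cos θ : ℝ) : ℂ) := by
  have h1 := aux_exp_inv w
  have h2 := aux_exp_inv θ
  have hw := aux_two_cos w
  have hθ := aux_two_cos θ
  push_cast [sub_eq_iff_eq_add] at hw hθ ⊢
  linear_combination (Complex.exp (w*I) - Complex.exp (θ*I) - Complex.exp (-θ*I)) * h1 + Complex.exp (-w*I) * h2 + hw - hθ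

lemma aux_pair2 (w θ : ℝ) :
    (Complex.exp (w * I) - Complex.exp (θ * I)) * (Complex.exp (-w * I) - Complex.exp (-θ * I))
      = ((2 - 2 * Real.cos (w - θ) : ℝ) : ℂ) := by
  have h1 := aux_exp_inv w
  have h2 := aux_exp_inv θ
  have h3 := aux_two_cos (w - θ)
  have e1 : Complex.exp (↑(w - θ) * I) = Complex.exp (w * I) * Complex.exp (-θ * I) := by
    rw [← Complex.exp_add]; push_cast; ring_nf
  have e2 : Complex.exp (-↑(w - θ) * I) = Complex.exp (-w * I) * Complex.exp (θ * I) := by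
    rw [← Complex.exp_add]; push_cast; ring_nf
  rw [e1, e2] at h3
  push_cast at h3 ⊢
  linear_combination h1 + h2 - h3


lemma aux_cot' (θ : ℝ) (h : Real.cos θ ≠ 1) :
    Real.cot (θ/2) * (2 - 2 * Real.cos θ) = 2 * Real.sin θ := by
  have hc : Real.cos θ = 2 * Real.cos (θ/2) ^ 2 - 1 := by
    rw [← Real.cos_two_mul]; ring_nf
  have hs : Real.sin θ = 2 * Real.sin (θ/2) * Real.cos (θ/2) := by
    rw [← Real.sin_two_mul]; ring_nf
  have hpy := Real.sin_sq_add_cos_sq (θ/2)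
  have hsne : Real.sin (θ/2) ≠ 0 := by
    intro h0
    apply h
    nlinarith [h0]
  rw [Real.cot_eq_cos_div_sin, hc, hs, div_mul_eq_mul_div, div_eq_iff hsne]
  linear_combination (-4*Real.cos (θ/2)) * hpy

lemma aux_cos_ne_one (w θ : ℝ) (h : Complex.exp (w * I) ≠ Complex.exp (θ * I)) :
    Real.cos (w - θ) ≠ 1 := by
  intro hc
  apply h
  have hs : Real.sin (w - θ) = 0 := by
    nlinarith [Real.sin_sq_add_cos_sq (w - θ)]
  have h1 : Complex.exp (↑(w - θ) * I) = 1 := by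
    rw [aux_euler, hc, hs]; norm_num
  have := aux_exp_inv θ
  calc Complex.exp (w*I) = Complex.exp (↑(w-θ)*I) * Complex.exp (θ*I) := by
        rw [← Complex.exp_add]; push_cast; ring_nf
    _ = Complex.exp (θ*I) := by rw [h1, one_mul]

lemma aux_pos_factor (w θ : ℝ) (h : Complex.exp (w * I) ≠ Complex.exp (θ * I)) :
    0 < 2 - 2 * Real.cos (w - θ) := by
  have h1 := aux_cos_ne_one w θ h
  have h2 := Real.cos_le_one (w - θ)
  cases lt_or_eq_of_le h2 with
  | inl h3 => linarith
  | inr h3 => exact absurd h3 h1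

lemma aux_cos_ne (w θ : ℝ) (h1 : Complex.exp (w * I) ≠ Complex.exp (θ * I))
    (h2 : Complex.exp (w * I) ≠ Complex.exp (-θ * I)) :
    Real.cos w ≠ Real.cos θ := by
  intro hc
  have hs : Real.sin w = Real.sin θ ∨ Real.sin w = - Real.sin θ := by
    have : (Real.sin w - Real.sin θ) * (Real.sin w + Real.sin θ) = 0 := by
      linear_combination Real.sin_sq_add_cos_sq w - Real.sin_sq_add_cos_sq θ -
        (Real.cos w + Real.cos θ) * hc
    rcases mul_eq_zero.mp this with h | h
    · left; linarith
    · right; linarith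
  cases hs with
  | inl h => exact h1 (by rw [aux_euler, aux_euler, hc, h])
  | inr h =>
    apply h2
    rw [aux_euler w, show (-(θ:ℂ) : ℂ) = ((-θ:ℝ):ℂ) from by push_cast; ring, aux_euler (-θ)]
    rw [Real.cos_neg, Real.sin_neg, hc, h]

lemma aux_deg (e : ℕ → ℂ) (s : Finset ℕ) :
    (Polynomial.X * ∏ k ∈ s, (Polynomial.X - Polynomial.C (e k))).natDegree = 1 + s.card := by
  have hm : (∏ k ∈ s, (Polynomial.X - Polynomial.C (e k))).Monic :=
    Polynomial.monic_prod_of_monic _ _ fun k _ => Polynomial.monic_X_sub_C _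
  rw [Polynomial.natDegree_mul Polynomial.X_ne_zero hm.ne_zero, Polynomial.natDegree_X,
      Polynomial.natDegree_prod _ _ (fun k _ => Polynomial.X_sub_C_ne_zero (e k))]
  simp [Polynomial.natDegree_X_sub_C]

lemma aux_eval (e : ℕ → ℂ) (s : Finset ℕ) (z : ℂ) :
    (Polynomial.X * ∏ k ∈ s, (Polynomial.X - Polynomial.C (e k))).eval z
      = z * ∏ k ∈ s, (z - e k) := by
  simp [Polynomial.eval_prod]

lemma aux_summand (w θ : ℝ) (ψ : ℕ → ℝ) (s : Finset ℕ) (c : ℂ) :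
    c * ((∏ k ∈ s, (Complex.exp (w*I) - Complex.exp (ψ k * I)))
        * ((Complex.exp (w*I) - Complex.exp (-θ * I)) * (Complex.exp (w*I) - Complex.exp (θ * I))))
      * (starRingEnd ℂ) (Complex.exp (w*I) * ∏ k ∈ s, (Complex.exp (w*I) - Complex.exp (ψ k * I)))
      = c * ((2 * Real.cos w - 2 * Real.cos θ : ℝ) : ℂ)
          * ((∏ k ∈ s, (2 - 2 * Real.cos (w - ψ k) : ℝ) : ℝ) : ℂ) := by
  rw [map_mul, map_prod]
  simp only [map_sub, aux_conj_exp]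
  calc c * ((∏ k ∈ s, (Complex.exp (w*I) - Complex.exp (ψ k * I)))
        * ((Complex.exp (w*I) - Complex.exp (-θ * I)) * (Complex.exp (w*I) - Complex.exp (θ * I))))
      * (Complex.exp (-w*I) * ∏ k ∈ s, (Complex.exp (-w*I) - Complex.exp (-ψ k * I)))
      = c * ((Complex.exp (w*I) - Complex.exp (θ*I)) * (Complex.exp (w*I) - Complex.exp (-θ*I))
          * Complex.exp (-w*I))
        * ∏ k ∈ s, ((Complex.exp (w*I) - Complex.exp (ψ k * I))
            * (Complex.exp (-w*I) - Complex.exp (-ψ k * I))) := by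
        rw [Finset.prod_mul_distrib]; ring
    _ = _ := by
        rw [aux_pair, Finset.prod_congr rfl (fun k _ => aux_pair2 w (ψ k)), ← Complex.ofReal_prod]

lemma aux_summandB (w θ μ : ℝ) (ψ : ℕ → ℝ) (s : Finset ℕ) (c : ℂ) :
    c * (((Complex.exp (w*I) - Complex.exp (μ * I)) * ∏ k ∈ s, (Complex.exp (w*I) - Complex.exp (ψ k * I)))
        * ((Complex.exp (w*I) - Complex.exp (-θ * I)) * (Complex.exp (w*I) - Complex.exp (θ * I))))
      * (starRingEnd ℂ) (Complex.exp (w*I) * ∏ k ∈ s, (Complex.exp (w*I) - Complex.exp (ψ k * I)))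
      = c * ((2 * Real.cos w - 2 * Real.cos θ : ℝ) : ℂ)
          * ((∏ k ∈ s, (2 - 2 * Real.cos (w - ψ k) : ℝ) : ℝ) : ℂ)
          * (Complex.exp (w*I) - Complex.exp (μ * I)) := by
  have := aux_summand w θ ψ s c
  calc c * (((Complex.exp (w*I) - Complex.exp (μ * I)) * ∏ k ∈ s, (Complex.exp (w*I) - Complex.exp (ψ k * I)))
        * ((Complex.exp (w*I) - Complex.exp (-θ * I)) * (Complex.exp (w*I) - Complex.exp (θ * I))))
      * (starRingEnd ℂ) (Complex.exp (w*I) * ∏ k ∈ s, (Complex.exp (w*I) - Complex.exp (ψ k * I)))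
      = (c * ((∏ k ∈ s, (Complex.exp (w*I) - Complex.exp (ψ k * I)))
        * ((Complex.exp (w*I) - Complex.exp (-θ * I)) * (Complex.exp (w*I) - Complex.exp (θ * I))))
      * (starRingEnd ℂ) (Complex.exp (w*I) * ∏ k ∈ s, (Complex.exp (w*I) - Complex.exp (ψ k * I))))
        * (Complex.exp (w*I) - Complex.exp (μ * I)) := by ring
    _ = _ := by rw [this]

lemma aux_cot_neg (x : ℝ) : Real.cot (-x) = - Real.cot x := by
  rw [Real.cot_eq_cos_div_sin, Real.cot_eq_cos_div_sin, Real.cos_neg, Real.sin_neg, div_neg]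

lemma aux_imterm (r w μ : ℝ) :
    ((r : ℂ) * (Complex.exp (w*I) - Complex.exp (μ*I)) * Complex.exp (-μ*I)).im
      = r * Real.sin (w - μ) := by
  have h1 : (r : ℂ) * (Complex.exp (w*I) - Complex.exp (μ*I)) * Complex.exp (-μ*I)
      = (r:ℂ) * (Complex.exp (↑(w - μ) * I) - 1) := by
    have e1 : Complex.exp (↑(w - μ) * I) = Complex.exp (w * I) * Complex.exp (-μ * I) := by
      rw [← Complex.exp_add]; push_cast; ring_nf
    have e2 := aux_exp_inv μ
    rw [e1]; linear_combination (-(r:ℂ)) * e2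
  rw [h1]
  simp only [Complex.mul_im, Complex.sub_im, Complex.sub_re, Complex.one_im, Complex.one_re,
    Complex.ofReal_re, Complex.ofReal_im, Complex.exp_ofReal_mul_I_im, zero_mul, mul_zero]
  ring


/-- Theorem (discrete measure, conjugate pair, monotonicity): under the discrete
paraorthogonality setup with a conjugate pair of zeros `e^{±iφ_n(t)}`, if at some
`t ∈ I` one has `W̃_j(t) ≥ 0` for all `j` and `W̃_j(t) > 0` for some `j`, then
`φ_n'(t) > 0`, i.e. the zero `ζ(t) = e^{iφ_n(t)}` moves strictly counterclockwise
along the unit circle as `t` increases. -/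
theorem discrete_popuc_conjugate_pair_zero_moves_counterclockwise
    -- the open interval `I = (a, b)`
    (a b : ℝ) (hab : a < b)
    -- the masses `γ_j` and mass points `ω_j`, `j = 0, …, N`
    (N : ℕ) (γ ω : ℕ → ℝ → ℝ)
    (hγpos : ∀ j ≤ N, ∀ t ∈ Set.Ioo a b, 0 < γ j t)
    (hγdiff : ∀ j ≤ N, ∀ t ∈ Set.Ioo a b, DifferentiableAt ℝ (γ j) t)
    (hωdiff : ∀ j ≤ N, ∀ t ∈ Set.Ioo a b, DifferentiableAt ℝ (ω j) t)
    -- the zeros `e^{iφ_k(t)}`, `k = 1, …, n`, of the POPUC `P(·; t)`, with the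
    -- conjugate pair `e^{±iφ_n(t)}`
    (n : ℕ) (hn : 2 ≤ n) (φ : ℕ → ℝ → ℝ)
    (hφdiff : ∀ k ∈ Finset.Icc 1 n, ∀ t ∈ Set.Ioo a b, DifferentiableAt ℝ (φ k) t)
    (hconj : ∀ t ∈ Set.Ioo a b, φ (n - 1) t = -φ n t)
    (hrange : ∀ t ∈ Set.Ioo a b, φ n t ∈ Set.Ioo 0 Real.pi)
    (P : ℂ → ℝ → ℂ)
    (hP : ∀ z t, P z t = ∏ k ∈ Finset.Icc 1 n, (z - Complex.exp (φ k t * Complex.I)))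
    (hdistinct : ∀ t ∈ Set.Ioo a b, ∀ j ∈ Finset.Icc 1 n, ∀ k ∈ Finset.Icc 1 n, j ≠ k →
      Complex.exp (φ j t * Complex.I) ≠ Complex.exp (φ k t * Complex.I))
    (hsep : ∀ t ∈ Set.Ioo a b, ∀ j ≤ N, ∀ k ∈ Finset.Icc 1 n,
      Complex.exp (ω j t * Complex.I) ≠ Complex.exp (φ k t * Complex.I))
    -- paraorthogonality with respect to the measure `Σ_j γ_j(t) δ(θ − ω_j(t))`
    (hpara : ∀ t ∈ Set.Ioo a b, ∀ g : Polynomial ℂ,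
      g.natDegree ≤ n - 1 → g.eval 0 = 0 →
      ∑ j ∈ Finset.range (N + 1), (γ j t : ℂ) *
        P (Complex.exp (ω j t * Complex.I)) t *
        (starRingEnd ℂ) (g.eval (Complex.exp (ω j t * Complex.I))) = 0)
    -- the functions `s̃`, `S̃` and `W̃_j`
    (s' : ℝ → ℝ → ℝ)
    (hs' : ∀ θ t, s' θ t = 1 / (2 * (Real.cos (φ n t) - Real.cos θ)))
    (S' : ℝ → ℝ → ℝ)
    (hS' : ∀ θ t, S' θ t = Real.sin θ / (Real.cos θ - Real.cos (φ n t)) +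
      ∑ k ∈ Finset.Icc 1 (n - 2), Real.cot ((φ k t - θ) / 2))
    (W' : ℕ → ℝ → ℝ)
    (hW' : ∀ j t, W' j t = s' (ω j t) t * deriv (γ j) t -
      γ j t * s' (ω j t) t * S' (ω j t) t * deriv (ω j) t)
    -- hypotheses on the sign of the `W̃_j` at a given `t`
    (t : ℝ) (ht : t ∈ Set.Ioo a b)
    (hWnonneg : ∀ j ≤ N, 0 ≤ W' j t)
    (hWpos : ∃ j ≤ N, 0 < W' j t)
    -- conclusion
    : 0 < deriv (φ n) t := by
  classical
  have htI := ht
  have hIcc_split : Finset.Icc 1 n = insert (n-1) (insert n (Finset.Icc 1 (n-2))) := by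
    ext k; simp only [Finset.mem_Icc, Finset.mem_insert]; omega
  have hn_not : n ∉ Finset.Icc 1 (n-2) := by simp only [Finset.mem_Icc]; omega
  have hn1_not : (n-1) ∉ insert n (Finset.Icc 1 (n-2)) := by
    simp only [Finset.mem_insert, Finset.mem_Icc]; omega
  have hsub : ∀ m ∈ Finset.Icc 1 (n-2), m ∈ Finset.Icc 1 n := by
    intro m hm; simp only [Finset.mem_Icc] at *; omega
  have hnmem : n ∈ Finset.Icc 1 n := by simp only [Finset.mem_Icc]; omega
  have hn1mem : (n-1) ∈ Finset.Icc 1 n := by simp only [Finset.mem_Icc]; omega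
  have hsplitP : ∀ (Z : ℂ) (u : ℝ),
      ∏ k ∈ Finset.Icc 1 n, (Z - Complex.exp (φ k u * Complex.I))
        = (∏ k ∈ Finset.Icc 1 (n-2), (Z - Complex.exp (φ k u * Complex.I))) *
          ((Z - Complex.exp (φ n u * Complex.I)) * (Z - Complex.exp (φ (n-1) u * Complex.I))) := by
    intro Z u
    rw [hIcc_split, Finset.prod_insert hn1_not, Finset.prod_insert hn_not]; ring
  -- Step 1: the basic real identity at every u ∈ (a,b)
  have step1 : ∀ u ∈ Set.Ioo a b,
      ∑ j ∈ Finset.range (N+1), γ j u *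
        ((2*Real.cos (ω j u) - 2*Real.cos (φ n u)) *
          ∏ k ∈ Finset.Icc 1 (n-2), (2 - 2*Real.cos (ω j u - φ k u))) = 0 := by
    intro u hu
    have hdeg : (Polynomial.X * ∏ k ∈ Finset.Icc 1 (n-2),
        (Polynomial.X - Polynomial.C (Complex.exp (φ k u * Complex.I)))).natDegree ≤ n - 1 := by
      rw [aux_deg, Nat.card_Icc]; omega
    have hev : (Polynomial.X * ∏ k ∈ Finset.Icc 1 (n-2),
        (Polynomial.X - Polynomial.C (Complex.exp (φ k u * Complex.I)))).eval 0 = 0 := by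
      simp
    have hg := hpara u hu _ hdeg hev
    have key : ∀ j ∈ Finset.range (N+1),
        (γ j u : ℂ) * P (Complex.exp (ω j u * Complex.I)) u *
          (starRingEnd ℂ) ((Polynomial.X * ∏ k ∈ Finset.Icc 1 (n-2),
            (Polynomial.X - Polynomial.C (Complex.exp (φ k u * Complex.I)))).eval
              (Complex.exp (ω j u * Complex.I)))
        = ((γ j u * ((2*Real.cos (ω j u) - 2*Real.cos (φ n u)) *
            ∏ k ∈ Finset.Icc 1 (n-2), (2 - 2*Real.cos (ω j u - φ k u))) : ℝ) : ℂ) := by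
      intro j hj
      rw [hP, aux_eval, hsplitP, hconj u hu]
      have h := aux_summand (ω j u) (φ n u) (fun k => φ k u) (Finset.Icc 1 (n-2)) ((γ j u : ℝ) : ℂ)
      push_cast at h ⊢
      linear_combination h
    rw [Finset.sum_congr rfl key, ← Complex.ofReal_sum] at hg
    exact_mod_cast hg
  -- Step 2: the elimination identities at t
  have step2 : ∀ m ∈ Finset.Icc 1 (n-2),
      ∑ j ∈ Finset.range (N+1),
        (γ j t * (2*Real.cos (ω j t) - 2*Real.cos (φ n t)) *
          ∏ k ∈ (Finset.Icc 1 (n-2)).erase m, (2 - 2*Real.cos (ω j t - φ k t))) *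
            Real.sin (ω j t - φ m t) = 0 := by
    intro m hm
    have hmIcc := Finset.mem_Icc.mp hm
    have hdeg : (Polynomial.X * ∏ k ∈ (Finset.Icc 1 (n-2)).erase m,
        (Polynomial.X - Polynomial.C (Complex.exp (φ k t * Complex.I)))).natDegree ≤ n - 1 := by
      rw [aux_deg, Finset.card_erase_of_mem hm, Nat.card_Icc]; omega
    have hev : (Polynomial.X * ∏ k ∈ (Finset.Icc 1 (n-2)).erase m,
        (Polynomial.X - Polynomial.C (Complex.exp (φ k t * Complex.I)))).eval 0 = 0 := by
      simp
    have hg := hpara t htI _ hdeg hev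
    have key : ∀ j ∈ Finset.range (N+1),
        (γ j t : ℂ) * P (Complex.exp (ω j t * Complex.I)) t *
          (starRingEnd ℂ) ((Polynomial.X * ∏ k ∈ (Finset.Icc 1 (n-2)).erase m,
            (Polynomial.X - Polynomial.C (Complex.exp (φ k t * Complex.I)))).eval
              (Complex.exp (ω j t * Complex.I)))
        = ((γ j t * (2*Real.cos (ω j t) - 2*Real.cos (φ n t)) *
            ∏ k ∈ (Finset.Icc 1 (n-2)).erase m, (2 - 2*Real.cos (ω j t - φ k t)) : ℝ) : ℂ) *
          (Complex.exp (ω j t * Complex.I) - Complex.exp (φ m t * Complex.I)) := by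
      intro j hj
      rw [hP, aux_eval, hsplitP, hconj t htI,
        show (∏ k ∈ Finset.Icc 1 (n-2),
            (Complex.exp (ω j t * Complex.I) - Complex.exp (φ k t * Complex.I)))
          = (Complex.exp (ω j t * Complex.I) - Complex.exp (φ m t * Complex.I)) *
            ∏ k ∈ (Finset.Icc 1 (n-2)).erase m,
              (Complex.exp (ω j t * Complex.I) - Complex.exp (φ k t * Complex.I)) from
          (Finset.mul_prod_erase (Finset.Icc 1 (n-2))
            (fun k => Complex.exp (ω j t * Complex.I) - Complex.exp (φ k t * Complex.I)) hm).symm]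
      have h := aux_summandB (ω j t) (φ n t) (φ m t) (fun k => φ k t)
        ((Finset.Icc 1 (n-2)).erase m) ((γ j t : ℝ) : ℂ)
      push_cast at h ⊢
      linear_combination h
    rw [Finset.sum_congr rfl key] at hg
    have hg2 : ∑ j ∈ Finset.range (N+1),
        ((γ j t * (2*Real.cos (ω j t) - 2*Real.cos (φ n t)) *
            ∏ k ∈ (Finset.Icc 1 (n-2)).erase m, (2 - 2*Real.cos (ω j t - φ k t)) : ℝ) : ℂ) *
          (Complex.exp (ω j t * Complex.I) - Complex.exp (φ m t * Complex.I)) *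
            Complex.exp (-↑(φ m t) * Complex.I) = 0 := by
      rw [← Finset.sum_mul, hg, zero_mul]
    have hg3 := congrArg Complex.im hg2
    rw [Complex.im_sum] at hg3
    rw [Finset.sum_congr rfl (fun j _ => aux_imterm _ _ _)] at hg3
    simpa using hg3
  -- differentiability and the derivative of the step-1 identity
  have hFder : HasDerivAt (fun u => ∑ j ∈ Finset.range (N+1), γ j u *
      ((2*Real.cos (ω j u) - 2*Real.cos (φ n u)) *
        ∏ k ∈ Finset.Icc 1 (n-2), (2 - 2*Real.cos (ω j u - φ k u))))
    (∑ j ∈ Finset.range (N+1),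
      (deriv (γ j) t * ((2*Real.cos (ω j t) - 2*Real.cos (φ n t)) *
        ∏ k ∈ Finset.Icc 1 (n-2), (2 - 2*Real.cos (ω j t - φ k t)))
      + γ j t * ((2*(-Real.sin (ω j t) * deriv (ω j) t) - 2*(-Real.sin (φ n t) * deriv (φ n) t)) *
          (∏ k ∈ Finset.Icc 1 (n-2), (2 - 2*Real.cos (ω j t - φ k t)))
        + (2*Real.cos (ω j t) - 2*Real.cos (φ n t)) *
          ∑ m ∈ Finset.Icc 1 (n-2), (∏ k ∈ (Finset.Icc 1 (n-2)).erase m,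
            (2 - 2*Real.cos (ω j t - φ k t))) •
            (0 - 2*(-Real.sin (ω j t - φ m t) * (deriv (ω j) t - deriv (φ m) t)))))) t := by
    apply HasDerivAt.fun_sum
    intro j hj
    have hjN : j ≤ N := Finset.mem_range_succ_iff.mp hj
    have hγ' := (hγdiff j hjN t htI).hasDerivAt
    have hω' := (hωdiff j hjN t htI).hasDerivAt
    have hφn' := (hφdiff n hnmem t htI).hasDerivAt
    have hA : HasDerivAt (fun u => 2*Real.cos (ω j u) - 2*Real.cos (φ n u))
        (2*(-Real.sin (ω j t) * deriv (ω j) t) - 2*(-Real.sin (φ n t) * deriv (φ n) t)) t :=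
      (hω'.cos.const_mul 2).sub (hφn'.cos.const_mul 2)
    have hB : HasDerivAt (fun u => ∏ k ∈ Finset.Icc 1 (n-2), (2 - 2*Real.cos (ω j u - φ k u)))
        (∑ m ∈ Finset.Icc 1 (n-2), (∏ k ∈ (Finset.Icc 1 (n-2)).erase m,
          (2 - 2*Real.cos (ω j t - φ k t))) •
          (0 - 2*(-Real.sin (ω j t - φ m t) * (deriv (ω j) t - deriv (φ m) t)))) t := by
      apply HasDerivAt.fun_finsetProd
      intro m hm
      exact (hasDerivAt_const t (2:ℝ)).sub
        (((hω'.sub (hφdiff m (hsub m hm) t htI).hasDerivAt).cos).const_mul 2)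
    exact hγ'.mul (hA.mul hB)
  have hderiv0 : deriv (fun u => ∑ j ∈ Finset.range (N+1), γ j u *
      ((2*Real.cos (ω j u) - 2*Real.cos (φ n u)) *
        ∏ k ∈ Finset.Icc 1 (n-2), (2 - 2*Real.cos (ω j u - φ k u)))) t = 0 := by
    have hev0 : (fun u => ∑ j ∈ Finset.range (N+1), γ j u *
        ((2*Real.cos (ω j u) - 2*Real.cos (φ n u)) *
          ∏ k ∈ Finset.Icc 1 (n-2), (2 - 2*Real.cos (ω j u - φ k u))))
        =ᶠ[nhds t] (fun _ => (0:ℝ)) := by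
      filter_upwards [isOpen_Ioo.mem_nhds htI] with u hu using step1 u hu
    rw [hev0.deriv_eq, deriv_const]
  have hd0 := hFder.deriv.symm.trans hderiv0
  -- basic sign facts
  have hAne : ∀ j ≤ N, Real.cos (ω j t) ≠ Real.cos (φ n t) := by
    intro j hj
    apply aux_cos_ne
    · exact hsep t htI j hj n hnmem
    · have h2 := hsep t htI j hj (n-1) hn1mem
      rw [hconj t htI] at h2
      push_cast at h2
      exact h2
  have hprodpos : ∀ j ≤ N, ∀ (s : Finset ℕ), (∀ k ∈ s, k ∈ Finset.Icc 1 n) →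
      0 < ∏ k ∈ s, (2 - 2*Real.cos (ω j t - φ k t)) := by
    intro j hj s hs
    apply Finset.prod_pos
    intro k hk
    exact aux_pos_factor _ _ (hsep t htI j hj k (hs k hk))
  -- rewriting each derivative summand
  have hDraw : ∀ j ∈ Finset.range (N+1),
      (deriv (γ j) t * ((2*Real.cos (ω j t) - 2*Real.cos (φ n t)) *
        ∏ k ∈ Finset.Icc 1 (n-2), (2 - 2*Real.cos (ω j t - φ k t)))
      + γ j t * ((2*(-Real.sin (ω j t) * deriv (ω j) t) - 2*(-Real.sin (φ n t) * deriv (φ n) t)) *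
          (∏ k ∈ Finset.Icc 1 (n-2), (2 - 2*Real.cos (ω j t - φ k t)))
        + (2*Real.cos (ω j t) - 2*Real.cos (φ n t)) *
          ∑ m ∈ Finset.Icc 1 (n-2), (∏ k ∈ (Finset.Icc 1 (n-2)).erase m,
            (2 - 2*Real.cos (ω j t - φ k t))) •
            (0 - 2*(-Real.sin (ω j t - φ m t) * (deriv (ω j) t - deriv (φ m) t)))))
      = -((2*Real.cos (ω j t) - 2*Real.cos (φ n t))^2 *
            (∏ k ∈ Finset.Icc 1 (n-2), (2 - 2*Real.cos (ω j t - φ k t))) * W' j t)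
        + deriv (φ n) t * (2*Real.sin (φ n t) *
            (γ j t * ∏ k ∈ Finset.Icc 1 (n-2), (2 - 2*Real.cos (ω j t - φ k t))))
        - γ j t * ((2*Real.cos (ω j t) - 2*Real.cos (φ n t)) *
            ∑ m ∈ Finset.Icc 1 (n-2), deriv (φ m) t *
              (2*Real.sin (ω j t - φ m t) *
                ∏ k ∈ (Finset.Icc 1 (n-2)).erase m, (2 - 2*Real.cos (ω j t - φ k t)))) := by
    intro j hj
    have hjN : j ≤ N := Finset.mem_range_succ_iff.mp hj
    have hAn := hAne j hjN
    have hAs : (2*Real.cos (ω j t) - 2*Real.cos (φ n t)) * s' (ω j t) t = -1 := by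
      rw [hs']
      have h0 : Real.cos (φ n t) - Real.cos (ω j t) ≠ 0 := sub_ne_zero.mpr (Ne.symm hAn)
      field_simp
      ring
    have hcot : ∀ m ∈ Finset.Icc 1 (n-2),
        Real.cot ((φ m t - ω j t)/2) *
            ∏ k ∈ Finset.Icc 1 (n-2), (2 - 2*Real.cos (ω j t - φ k t))
        = -(2*Real.sin (ω j t - φ m t) *
            ∏ k ∈ (Finset.Icc 1 (n-2)).erase m, (2 - 2*Real.cos (ω j t - φ k t))) := by
      intro m hm
      have hBm : (2 - 2*Real.cos (ω j t - φ m t)) *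
          ∏ k ∈ (Finset.Icc 1 (n-2)).erase m, (2 - 2*Real.cos (ω j t - φ k t))
          = ∏ k ∈ Finset.Icc 1 (n-2), (2 - 2*Real.cos (ω j t - φ k t)) :=
        Finset.mul_prod_erase (Finset.Icc 1 (n-2)) (fun k => 2 - 2*Real.cos (ω j t - φ k t)) hm
      have hc1 : Real.cos (ω j t - φ m t) ≠ 1 :=
        aux_cos_ne_one _ _ (hsep t htI j hjN m (hsub m hm))
      have h4 := aux_cot' (ω j t - φ m t) hc1
      rw [show (φ m t - ω j t)/2 = -((ω j t - φ m t)/2) from by ring, aux_cot_neg]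
      linear_combination
        (-(∏ k ∈ (Finset.Icc 1 (n-2)).erase m, (2 - 2*Real.cos (ω j t - φ k t)))) * h4
        + Real.cot ((ω j t - φ m t)/2) * hBm
    have hABS : (2*Real.cos (ω j t) - 2*Real.cos (φ n t)) *
        ((∏ k ∈ Finset.Icc 1 (n-2), (2 - 2*Real.cos (ω j t - φ k t))) * S' (ω j t) t)
        = 2*Real.sin (ω j t) * ∏ k ∈ Finset.Icc 1 (n-2), (2 - 2*Real.cos (ω j t - φ k t))
          - (2*Real.cos (ω j t) - 2*Real.cos (φ n t)) *
            ∑ m ∈ Finset.Icc 1 (n-2), 2*Real.sin (ω j t - φ m t) *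
              ∏ k ∈ (Finset.Icc 1 (n-2)).erase m, (2 - 2*Real.cos (ω j t - φ k t)) := by
      rw [hS']
      have h0 : Real.cos (ω j t) - Real.cos (φ n t) ≠ 0 := sub_ne_zero.mpr hAn
      have e2 : (2*Real.cos (ω j t) - 2*Real.cos (φ n t)) *
          (Real.sin (ω j t)/(Real.cos (ω j t) - Real.cos (φ n t))) = 2*Real.sin (ω j t) := by
        field_simp
      have e1 : (∏ k ∈ Finset.Icc 1 (n-2), (2 - 2*Real.cos (ω j t - φ k t))) *
          (∑ m ∈ Finset.Icc 1 (n-2), Real.cot ((φ m t - ω j t)/2))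
          = -∑ m ∈ Finset.Icc 1 (n-2), 2*Real.sin (ω j t - φ m t) *
              ∏ k ∈ (Finset.Icc 1 (n-2)).erase m, (2 - 2*Real.cos (ω j t - φ k t)) := by
        rw [Finset.mul_sum, ← Finset.sum_neg_distrib]
        apply Finset.sum_congr rfl
        intro m hm
        linear_combination hcot m hm
      linear_combination
        (∏ k ∈ Finset.Icc 1 (n-2), (2 - 2*Real.cos (ω j t - φ k t))) * e2
        + (2*Real.cos (ω j t) - 2*Real.cos (φ n t)) * e1
    have hsum1 : ∑ m ∈ Finset.Icc 1 (n-2), (∏ k ∈ (Finset.Icc 1 (n-2)).erase m,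
          (2 - 2*Real.cos (ω j t - φ k t))) •
          (0 - 2*(-Real.sin (ω j t - φ m t) * (deriv (ω j) t - deriv (φ m) t)))
        = deriv (ω j) t * ∑ m ∈ Finset.Icc 1 (n-2), 2*Real.sin (ω j t - φ m t) *
            ∏ k ∈ (Finset.Icc 1 (n-2)).erase m, (2 - 2*Real.cos (ω j t - φ k t))
          - ∑ m ∈ Finset.Icc 1 (n-2), deriv (φ m) t * (2*Real.sin (ω j t - φ m t) *
            ∏ k ∈ (Finset.Icc 1 (n-2)).erase m, (2 - 2*Real.cos (ω j t - φ k t))) := by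
      rw [Finset.mul_sum, ← Finset.sum_sub_distrib]
      apply Finset.sum_congr rfl
      intro m hm
      simp only [smul_eq_mul]
      ring
    rw [hW' j t, hsum1]
    linear_combination
      ((2*Real.cos (ω j t) - 2*Real.cos (φ n t)) *
          (∏ k ∈ Finset.Icc 1 (n-2), (2 - 2*Real.cos (ω j t - φ k t))) * deriv (γ j) t
        - γ j t * deriv (ω j) t * (2*Real.cos (ω j t) - 2*Real.cos (φ n t)) *
          (∏ k ∈ Finset.Icc 1 (n-2), (2 - 2*Real.cos (ω j t - φ k t))) * S' (ω j t) t) * hAs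
      + (γ j t * deriv (ω j) t) * hABS
  -- assemble
  have hd1 : ∑ j ∈ Finset.range (N+1),
      (-((2*Real.cos (ω j t) - 2*Real.cos (φ n t))^2 *
            (∏ k ∈ Finset.Icc 1 (n-2), (2 - 2*Real.cos (ω j t - φ k t))) * W' j t)
        + deriv (φ n) t * (2*Real.sin (φ n t) *
            (γ j t * ∏ k ∈ Finset.Icc 1 (n-2), (2 - 2*Real.cos (ω j t - φ k t))))
        - γ j t * ((2*Real.cos (ω j t) - 2*Real.cos (φ n t)) *
            ∑ m ∈ Finset.Icc 1 (n-2), deriv (φ m) t *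
              (2*Real.sin (ω j t - φ m t) *
                ∏ k ∈ (Finset.Icc 1 (n-2)).erase m, (2 - 2*Real.cos (ω j t - φ k t))))) = 0 :=
    (Finset.sum_congr rfl hDraw).symm.trans hd0
  have hZ0 : ∑ j ∈ Finset.range (N+1), γ j t *
      ((2*Real.cos (ω j t) - 2*Real.cos (φ n t)) *
        ∑ m ∈ Finset.Icc 1 (n-2), deriv (φ m) t *
          (2*Real.sin (ω j t - φ m t) *
            ∏ k ∈ (Finset.Icc 1 (n-2)).erase m, (2 - 2*Real.cos (ω j t - φ k t)))) = 0 := by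
    have h1 : ∀ j ∈ Finset.range (N+1), γ j t *
        ((2*Real.cos (ω j t) - 2*Real.cos (φ n t)) *
          ∑ m ∈ Finset.Icc 1 (n-2), deriv (φ m) t *
            (2*Real.sin (ω j t - φ m t) *
              ∏ k ∈ (Finset.Icc 1 (n-2)).erase m, (2 - 2*Real.cos (ω j t - φ k t))))
        = ∑ m ∈ Finset.Icc 1 (n-2), deriv (φ m) t *
            (2 * ((γ j t * (2*Real.cos (ω j t) - 2*Real.cos (φ n t)) *
              ∏ k ∈ (Finset.Icc 1 (n-2)).erase m, (2 - 2*Real.cos (ω j t - φ k t))) *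
                Real.sin (ω j t - φ m t))) := by
      intro j hj
      rw [Finset.mul_sum, Finset.mul_sum]
      exact Finset.sum_congr rfl fun m hm => by ring
    rw [Finset.sum_congr rfl h1, Finset.sum_comm]
    apply Finset.sum_eq_zero
    intro m hm
    rw [← Finset.mul_sum, ← Finset.mul_sum, step2 m hm, mul_zero, mul_zero]
  rw [Finset.sum_sub_distrib, Finset.sum_add_distrib, ← Finset.mul_sum,
    Finset.sum_neg_distrib, hZ0, sub_zero] at hd1
  -- positivity
  have hsinpos : 0 < Real.sin (φ n t) :=
    Real.sin_pos_of_pos_of_lt_pi (hrange t htI).1 (hrange t htI).2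
  have hYpos : 0 < ∑ j ∈ Finset.range (N+1), 2*Real.sin (φ n t) *
      (γ j t * ∏ k ∈ Finset.Icc 1 (n-2), (2 - 2*Real.cos (ω j t - φ k t))) := by
    apply Finset.sum_pos
    · intro j hj
      have hjN : j ≤ N := Finset.mem_range_succ_iff.mp hj
      have hB := hprodpos j hjN _ hsub
      have hγp := hγpos j hjN t htI
      positivity
    · exact ⟨0, Finset.mem_range.mpr (Nat.succ_pos N)⟩
  have hWsum : 0 < ∑ j ∈ Finset.range (N+1),
      (2*Real.cos (ω j t) - 2*Real.cos (φ n t))^2 *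
        (∏ k ∈ Finset.Icc 1 (n-2), (2 - 2*Real.cos (ω j t - φ k t))) * W' j t := by
    obtain ⟨j0, hj0N, hj0pos⟩ := hWpos
    apply Finset.sum_pos'
    · intro j hj
      have hjN : j ≤ N := Finset.mem_range_succ_iff.mp hj
      have hB := hprodpos j hjN _ hsub
      have hW := hWnonneg j hjN
      have := sq_nonneg (2*Real.cos (ω j t) - 2*Real.cos (φ n t))
      exact mul_nonneg (mul_nonneg this hB.le) hW
    · refine ⟨j0, Finset.mem_range_succ_iff.mpr hj0N, ?_⟩
      have hB := hprodpos j0 hj0N _ hsub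
      have hA2 : 0 < (2*Real.cos (ω j0 t) - 2*Real.cos (φ n t))^2 := by
        have hne : 2*Real.cos (ω j0 t) - 2*Real.cos (φ n t) ≠ 0 := by
          intro h; exact hAne j0 hj0N (by linarith)
        positivity
      exact mul_pos (mul_pos hA2 hB) hj0pos
  nlinarith [hd1, hWsum, hYpos]
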